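/- Let G be a group and let P, L, U, K be subgroups of G such that U is normal in P, P = LU, L ∩ U = {1}, G = PK, and K ∩ P = (K ∩ L)(K ∩ U). Let (σ, V) be a representation of L and let σ̃ : P → GL(V) be its inflation to P, i.e. σ̃(ℓu) = σ(ℓ) for ℓ ∈ L, u ∈ U (this is a well-defined group homomorphism). Then the restriction map f ↦ f|_K is a K-equivariant linear isomorphism from Ind_P^G V = {f : G → V : f(pg) = σ̃(p)f(g) for all p ∈ P, g ∈ G} (with G acting by right translation (g·f)(x) = f(xg)) onto Ind_{K∩P}^K V = {f : K → V : f(qk) = σ̃(q)f(k) for all q ∈ K ∩ P, k ∈ K} (with K acting by right translation). -/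

import Mathlib

/-- The induced representation `Ind_P^G V`: the space of functions `f : G → V` such that
`f (p * g) = σ p (f g)` for all `p ∈ P`, `g ∈ G`, as a `ℂ`-submodule of `G → V`.
Here `σ : G → (Module.End ℂ V)ˣ` is only used through its values on `P`. -/
def IndG {G : Type*} [Group G] {V : Type*} [AddCommGroup V] [Module ℂ V]
    (P : Subgroup G) (σ : G → (Module.End ℂ V)ˣ) : Submodule ℂ (G → V) where
  carrier := {f | ∀ p ∈ P, ∀ g : G, f (p * g) = (σ p : Module.End ℂ V) (f g)}
  add_mem' := by
    intro a b ha hb p hp g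
    simp only [Pi.add_apply, ha p hp g, hb p hp g, map_add]
  zero_mem' := by
    intro p hp g
    simp
  smul_mem' := by
    intro c a ha p hp g
    simp only [Pi.smul_apply, ha p hp g, map_smul]

/-- The induced representation `Ind_{K ∩ P}^K V`: the space of functions `f : K → V` such that
`f (q * k) = σ q (f k)` for all `q ∈ K ∩ P`, `k ∈ K`, as a `ℂ`-submodule of `K → V`. -/
def IndK {G : Type*} [Group G] {V : Type*} [AddCommGroup V] [Module ℂ V]
    (K P : Subgroup G) (σ : G → (Module.End ℂ V)ˣ) : Submodule ℂ (↥K → V) where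
  carrier := {f | ∀ q k : ↥K, (q : G) ∈ P → f (q * k) = (σ (q : G) : Module.End ℂ V) (f k)}
  add_mem' := by
    intro a b ha hb q k hq
    simp only [Pi.add_apply, ha q k hq, hb q k hq, map_add]
  zero_mem' := by
    intro q k hq
    simp
  smul_mem' := by
    intro c a ha q k hq
    simp only [Pi.smul_apply, ha q k hq, map_smul]

/-- under the hypotheses `U ⊴ P`, `P = LU`, `L ∩ U = 1`, `G = PK`,
`K ∩ P = (K ∩ L)(K ∩ U)`, with `σ` a representation of `L` inflated to `P`
(multiplicative on `P`, `σ (l * u) = σ l`), the restriction map `f ↦ f|_K` is a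
`K`-equivariant linear isomorphism `Ind_P^G V ≃ Ind_{K∩P}^K V`
(both with the right-translation action). -/
theorem statement0 {G : Type*} [Group G] {V : Type*} [AddCommGroup V] [Module ℂ V]
    (P L U K : Subgroup G)
    (hUP : U ≤ P) (hLP : L ≤ P)
    (hUnormal : ∀ p ∈ P, ∀ u ∈ U, p * u * p⁻¹ ∈ U)
    (hPLU : ∀ p ∈ P, ∃ l ∈ L, ∃ u ∈ U, p = l * u)
    (hLU : ∀ x : G, x ∈ L → x ∈ U → x = 1)
    (hIwasawa : ∀ g : G, ∃ p ∈ P, ∃ k ∈ K, g = p * k)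
    (hKP : ∀ q : G, q ∈ K → q ∈ P →
      ∃ l, l ∈ K ∧ l ∈ L ∧ ∃ u, u ∈ K ∧ u ∈ U ∧ q = l * u)
    (σ : G → (Module.End ℂ V)ˣ)
    (hσone : σ 1 = 1)
    (hσmul : ∀ p ∈ P, ∀ q ∈ P, σ (p * q) = σ p * σ q)
    (hσinfl : ∀ l ∈ L, ∀ u ∈ U, σ (l * u) = σ l) :
    ∃ e : IndG P σ ≃ₗ[ℂ] IndK K P σ,
      -- `e` is the restriction map `f ↦ f|_K`
      (∀ (f : IndG P σ) (x : ↥K), (e f : ↥K → V) x = (f : G → V) x) ∧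
      -- `e` is `K`-equivariant for the right-translation actions
      (∀ (f f' : IndG P σ) (k : ↥K),
        ((f' : G → V) = fun g => (f : G → V) (g * (k : G))) →
        ∀ x : ↥K, (e f' : ↥K → V) x = (e f : ↥K → V) (x * k)) := by
  classical
  -- the restriction linear map
  let res : IndG P σ →ₗ[ℂ] IndK K P σ :=
    { toFun := fun f => ⟨fun x => (f : G → V) x, by
        intro q k hq
        have := f.2 (q : G) hq (k : G)
        simpa using this⟩
      map_add' := fun f g => rfl
      map_smul' := fun c f => rfl }
  have hinj : Function.Injective res := by
    rw [injective_iff_map_eq_zero]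
    intro f hf
    apply Subtype.ext
    funext g
    obtain ⟨p, hp, k, hk, rfl⟩ := hIwasawa g
    have h1 := f.2 p hp k
    have h2 : (f : G → V) k = 0 := by
      have := congrFun (congrArg Subtype.val hf) ⟨k, hk⟩
      exact this
    simp [h1, h2]
  have hsurj : Function.Surjective res := by
    intro f
    have hdec : ∀ g : G, ∃ p, p ∈ P ∧ ∃ k, k ∈ K ∧ g = p * k := by
      intro g
      obtain ⟨p, hp, k, hk, h⟩ := hIwasawa g
      exact ⟨p, hp, k, hk, h⟩
    set F : G → V := fun g =>
      (σ (hdec g).choose : Module.End ℂ V)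
        ((f : ↥K → V) ⟨(hdec g).choose_spec.2.choose,
          (hdec g).choose_spec.2.choose_spec.1⟩) with hFdef
    have key : ∀ (g p : G), p ∈ P → ∀ k, ∀ hk : k ∈ K, g = p * k →
        F g = (σ p : Module.End ℂ V) ((f : ↥K → V) ⟨k, hk⟩) := by
      intro g p hp k hk hg
      set p' := (hdec g).choose with hp'def
      have hp' : p' ∈ P := (hdec g).choose_spec.1
      set k' := (hdec g).choose_spec.2.choose with hk'def
      have hk' : k' ∈ K := (hdec g).choose_spec.2.choose_spec.1
      have hg' : g = p' * k' := (hdec g).choose_spec.2.choose_spec.2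
      have hpk : p * k = p' * k' := by rw [← hg, ← hg']
      set q := p'⁻¹ * p with hqdef
      have hqP : q ∈ P := mul_mem (inv_mem hp') hp
      have hqk : q * k = k' := by
        have : p' * (q * k) = p' * k' := by
          rw [hqdef]; group; rw [hpk]
        exact mul_left_cancel this
      have hqK : q ∈ K := by
        have : q = k' * k⁻¹ := by rw [← hqk]; group
        rw [this]; exact mul_mem hk' (inv_mem hk)
      have hf := f.2 ⟨q, hqK⟩ ⟨k, hk⟩ hqP
      have hmulK : (⟨q, hqK⟩ * ⟨k, hk⟩ : ↥K) = ⟨k', hk'⟩ := by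
        apply Subtype.ext
        simpa using hqk
      rw [hmulK] at hf
      have hσ : σ p' * σ q = σ p := by
        rw [← hσmul p' hp' q hqP, hqdef]
        congr 1
        group
      calc F g = (σ p' : Module.End ℂ V) ((f : ↥K → V) ⟨k', hk'⟩) := rfl
        _ = (σ p' : Module.End ℂ V) ((σ q : Module.End ℂ V) ((f : ↥K → V) ⟨k, hk⟩)) := by
            rw [hf]
        _ = ((σ p' * σ q : (Module.End ℂ V)ˣ) : Module.End ℂ V) ((f : ↥K → V) ⟨k, hk⟩) := rfl
        _ = (σ p : Module.End ℂ V) ((f : ↥K → V) ⟨k, hk⟩) := by rw [hσ]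
    have hFmem : F ∈ IndG P σ := by
      intro p hp g
      obtain ⟨p0, hp0, k0, hk0, hg0⟩ := hdec g
      have h1 : F (p * g) = (σ (p * p0) : Module.End ℂ V) ((f : ↥K → V) ⟨k0, hk0⟩) := by
        apply key _ _ (mul_mem hp hp0) _ hk0
        rw [hg0, mul_assoc]
      have h2 : F g = (σ p0 : Module.End ℂ V) ((f : ↥K → V) ⟨k0, hk0⟩) :=
        key _ _ hp0 _ hk0 hg0
      rw [h1, h2, hσmul p hp p0 hp0]
      rfl
    refine ⟨⟨F, hFmem⟩, ?_⟩
    apply Subtype.ext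
    funext x
    have := key (x : G) 1 (one_mem P) (x : G) x.2 (by rw [one_mul])
    simp only [hσone] at this
    have hx : (⟨(x : G), x.2⟩ : ↥K) = x := rfl
    rw [hx] at this
    exact (by simpa using this : F (x : G) = (f : ↥K → V) x)
  refine ⟨LinearEquiv.ofBijective res ⟨hinj, hsurj⟩, fun f x => rfl, ?_⟩
  intro f f' k hff' x
  show (f' : G → V) (x : G) = (f : G → V) ((x * k : ↥K) : G)
  rw [hff']
  rfl
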